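/- A unidirectional quantum Turing machine M = (Σ, Q, δ) is well-formed if and only if its transition function δ satisfies: (Normalisation) ‖δ(p,σ)‖ = 1 for every (p,σ) ∈ Q × Σ; and (Orthogonality) ⟨δ_r(p₁,σ₁), δ_r(p₂,σ₂)⟩ = 0 for every pair (p₁,σ₁) ≠ (p₂,σ₂) in Q × Σ, where δ_r is the reduced transition function. Furthermore, any partial unidirectional quantum transition function satisfying these conditions can always be completed to the transition function of a well-formed unidirectional QTM. -/

import Mathlib

open scoped Classical

noncomputable section

/-- Head movement directions: Left, Right, or None. -/
inductive Dir3 : Type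
  | L
  | R
  | N
deriving DecidableEq

instance instFintypeDir3 : Fintype Dir3 :=
  ⟨{Dir3.L, Dir3.R, Dir3.N}, fun x => by cases x <;> simp⟩

/-- Displacement of the head. -/
def Dir3.move : Dir3 → ℤ
  | .L => -1
  | .R => 1
  | .N => 0

/-- A quantum Turing machine over finite tape alphabet `Γ` (blank `blank`) and finite
state set `Q` (initial `q0`, final `qf`), with quantum transition function
`δ : Q × Γ → ℂ^{Γ × Q × {L,R,N}}`; `δ p σ τ q d` is the amplitude for, reading `σ` in
state `p`, writing `τ`, entering `q` and moving in direction `d`. -/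
structure QTM (Γ Q : Type) where
  blank : Γ
  q0 : Q
  qf : Q
  δ : Q → Γ → Γ → Q → Dir3 → ℂ

/-- A configuration of a QTM: internal state, head position and tape contents. -/
structure QCfg (Γ Q : Type) where
  state : Q
  head : ℤ
  tape : ℤ → Γ

variable {Γ Q : Type}

/-- The superposition of configurations reached from a single configuration `c`
in one step. -/
def QTM.image [Fintype Γ] [Fintype Q] (M : QTM Γ Q) (c : QCfg Γ Q) :
    QCfg Γ Q →₀ ℂ :=
  ∑ τ : Γ, ∑ q : Q, ∑ d : Dir3,
    Finsupp.single
      ⟨q, c.head + d.move, Function.update c.tape c.head τ⟩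
      (M.δ c.state (c.tape c.head) τ q d)

/-- The time-evolution operator `U_M` of the QTM `M`, acting on the inner-product
space of finite complex linear combinations of configurations. -/
def QTM.evolve [Fintype Γ] [Fintype Q] (M : QTM Γ Q) :
    (QCfg Γ Q →₀ ℂ) →ₗ[ℂ] (QCfg Γ Q →₀ ℂ) :=
  Finsupp.lsum ℂ fun c => LinearMap.toSpanSingleton ℂ _ (M.image c)

/-- The squared Euclidean norm on finite linear combinations of configurations. -/
def normSqF {α : Type*} (v : α →₀ ℂ) : ℝ :=
  v.sum fun _ a => Complex.normSq a

/-- `M` is well-formed if its time evolution operator preserves the Euclidean norm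
(is an isometry). -/
def QTM.WellFormed [Fintype Γ] [Fintype Q] (M : QTM Γ Q) : Prop :=
  ∀ v : QCfg Γ Q →₀ ℂ, normSqF (M.evolve v) = normSqF v

/-- `M` is in normal form: `δ(q_f, σ) = |σ⟩|q₀⟩|N⟩` for every `σ`. -/
def QTM.NormalForm (M : QTM Γ Q) : Prop :=
  ∀ (σ τ : Γ) (q : Q) (d : Dir3),
    M.δ M.qf σ τ q d = if τ = σ ∧ q = M.q0 ∧ d = Dir3.N then 1 else 0

/-- `M` is unidirectional: each state can be entered while moving in only one
direction. -/
def QTM.Unidirectional (M : QTM Γ Q) : Prop :=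
  ∀ (p₁ σ₁ τ₁ p₂ σ₂ τ₂ : _) (q : Q) (d₁ d₂ : Dir3),
    M.δ p₁ σ₁ τ₁ q d₁ ≠ 0 → M.δ p₂ σ₂ τ₂ q d₂ ≠ 0 → d₁ = d₂

/-- The superposition `ψ` halts (for the first time) at time `n`: at time `n` it is
supported on configurations in the final state, and at no earlier time. -/
def QTM.HaltsAt [Fintype Γ] [Fintype Q] (M : QTM Γ Q) (ψ : QCfg Γ Q →₀ ℂ)
    (n : ℕ) : Prop :=
  (∀ c ∈ (M.evolve^[n] ψ).support, c.state = M.qf) ∧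
  ∀ t < n, ∃ c ∈ (M.evolve^[t] ψ).support, c.state ≠ M.qf

/-- `M` behaves properly on the set `X` of initial superpositions: started from any
`ψ ∈ X` it halts in a final superposition in which every configuration has the head in
the starting cell, the head never moves to the left of the starting cell, and at every
time step all configurations in the superposition have the head at the same location
(deterministic head movement). -/
def QTM.ProperOn [Fintype Γ] [Fintype Q] (M : QTM Γ Q)
    (X : Set (QCfg Γ Q →₀ ℂ)) : Prop :=
  ∀ ψ ∈ X, ∃ n : ℕ, M.HaltsAt ψ n ∧
    (∀ c ∈ (M.evolve^[n] ψ).support, c.head = 0) ∧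
    (∀ t ≤ n, ∀ c ∈ (M.evolve^[t] ψ).support, 0 ≤ c.head) ∧
    (∀ t ≤ n, ∀ c ∈ (M.evolve^[t] ψ).support, ∀ c' ∈ (M.evolve^[t] ψ).support,
      c.head = c'.head)

/-- Relabelling the internal state of every configuration in a superposition
(used to replace `q_f` by the initial state of the reverse machine, etc.). -/
def relabel {Q' : Type} (r : Q') (ψ : QCfg Γ Q →₀ ℂ) : QCfg Γ Q' →₀ ℂ :=
  Finsupp.mapDomain (fun c => ⟨r, c.head, c.tape⟩) ψ

/-- The set of tape cells visited (head positions occurring with nonzero amplitude)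
during the first `n` steps of the evolution of `ψ`. -/
def QTM.visited [Fintype Γ] [Fintype Q] (M : QTM Γ Q) (ψ : QCfg Γ Q →₀ ℂ)
    (n : ℕ) : Set ℤ :=
  {h : ℤ | ∃ t ≤ n, ∃ c ∈ (M.evolve^[t] ψ).support, c.head = h}

/-- The reduced transition function `δ_r` of a unidirectional QTM: the direction
component (determined by the entered state) is dropped. -/
def QTM.reduced (M : QTM Γ Q) (p : Q) (σ : Γ) (τ : Γ) (q : Q) : ℂ :=
  ∑ d : Dir3, M.δ p σ τ q d

/-- Normalisation: `‖δ(p,σ)‖ = 1` for every `(p, σ)`. -/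
def QTM.Normalised [Fintype Γ] [Fintype Q] (M : QTM Γ Q) : Prop :=
  ∀ (p : Q) (σ : Γ),
    ∑ τ : Γ, ∑ q : Q, ∑ d : Dir3, Complex.normSq (M.δ p σ τ q d) = 1

/-- Orthogonality: `⟨δ_r(p₁,σ₁), δ_r(p₂,σ₂)⟩ = 0` for distinct `(p₁,σ₁) ≠ (p₂,σ₂)`. -/
def QTM.Orthogonal [Fintype Γ] [Fintype Q] (M : QTM Γ Q) : Prop :=
  ∀ (p₁ : Q) (σ₁ : Γ) (p₂ : Q) (σ₂ : Γ), (p₁, σ₁) ≠ (p₂, σ₂) →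
    ∑ τ : Γ, ∑ q : Q,
      (starRingEnd ℂ) (M.reduced p₁ σ₁ τ q) * M.reduced p₂ σ₂ τ q = 0


variable {α : Type*}

def inn (v w : α →₀ ℂ) : ℂ := v.sum fun a x => (starRingEnd ℂ) x * w a

lemma inn_eq_sum_union (v w : α →₀ ℂ) :
    inn v w = ∑ a ∈ v.support ∪ w.support, (starRingEnd ℂ) (v a) * w a := by
  rw [inn, Finsupp.sum]
  exact Finset.sum_subset Finset.subset_union_left (by
    intro a _ ha
    simp [Finsupp.notMem_support_iff.mp ha])

lemma inn_conj_symm (v w : α →₀ ℂ) : (starRingEnd ℂ) (inn v w) = inn w v := by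
  rw [inn_eq_sum_union, inn_eq_sum_union, Finset.union_comm, map_sum]
  exact Finset.sum_congr rfl fun a _ => by ring_nf; simp [mul_comm]

lemma inn_add_left (v v' w : α →₀ ℂ) : inn (v + v') w = inn v w + inn v' w :=
  Finsupp.sum_add_index' (by simp) (by intros; simp [add_mul])

lemma inn_add_right (v w w' : α →₀ ℂ) : inn v (w + w') = inn v w + inn v w' := by
  simp [inn, Finsupp.sum, mul_add, Finset.sum_add_distrib]

lemma inn_zero_left (w : α →₀ ℂ) : inn 0 w = 0 := by simp [inn]
lemma inn_zero_right (v : α →₀ ℂ) : inn v 0 = 0 := by simp [inn]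

lemma inn_smul_left (x : ℂ) (v w : α →₀ ℂ) :
    inn (x • v) w = (starRingEnd ℂ) x * inn v w := by
  rw [inn, Finsupp.sum_smul_index' (by simp)]
  simp [inn, Finsupp.sum, Finset.mul_sum, mul_assoc]

lemma inn_smul_right (x : ℂ) (v w : α →₀ ℂ) : inn v (x • w) = x * inn v w := by
  simp [inn, Finsupp.sum, Finset.mul_sum]; ring_nf
  exact Finset.sum_congr rfl fun a _ => by ring

lemma inn_single_left (a : α) (x : ℂ) (w : α →₀ ℂ) :
    inn (Finsupp.single a x) w = (starRingEnd ℂ) x * w a :=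
  Finsupp.sum_single_index (by simp)

lemma inn_sum_left {ι : Type*} (s : Finset ι) (f : ι → (α →₀ ℂ)) (w : α →₀ ℂ) :
    inn (∑ i ∈ s, f i) w = ∑ i ∈ s, inn (f i) w := by
  induction s using Finset.cons_induction with
  | empty => simp [inn_zero_left]
  | cons a s ha ih => rw [Finset.sum_cons, Finset.sum_cons, inn_add_left, ih]

lemma inn_sum_right {ι : Type*} (s : Finset ι) (f : ι → (α →₀ ℂ)) (v : α →₀ ℂ) :
    inn v (∑ i ∈ s, f i) = ∑ i ∈ s, inn v (f i) := by
  induction s using Finset.cons_induction with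
  | empty => simp [inn_zero_right]
  | cons a s ha ih => rw [Finset.sum_cons, Finset.sum_cons, inn_add_right, ih]


variable {Γ Q : Type} [Fintype Γ] [Fintype Q]

lemma inn_self (v : QCfg Γ Q →₀ ℂ) : inn v v = (normSqF v : ℂ) := by
  rw [inn, normSqF, Finsupp.sum, Finsupp.sum, Complex.ofReal_sum]
  exact Finset.sum_congr rfl fun a _ => by rw [Complex.normSq_eq_conj_mul_self]

lemma evolve_single (M : QTM Γ Q) (c : QCfg Γ Q) (x : ℂ) :
    M.evolve (Finsupp.single c x) = x • M.image c := by
  simp [QTM.evolve]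

lemma evolve_apply (M : QTM Γ Q) (v : QCfg Γ Q →₀ ℂ) :
    M.evolve v = ∑ c ∈ v.support, v c • M.image c := by
  simp [QTM.evolve, Finsupp.lsum_apply, Finsupp.sum]

lemma Dir3.move_inj : Function.Injective Dir3.move := by
  intro a b h; cases a <;> cases b <;> simp [Dir3.move] at h ⊢ <;> omega

lemma uni_sum_dir (M : QTM Γ Q) (hU : M.Unidirectional)
    (p₁ p₂ : Q) (σ₁ σ₂ τ₁ τ₂ : Γ) (q : Q) :
    ∑ d : Dir3, (starRingEnd ℂ) (M.δ p₁ σ₁ τ₁ q d) * M.δ p₂ σ₂ τ₂ q d =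
      (starRingEnd ℂ) (M.reduced p₁ σ₁ τ₁ q) * M.reduced p₂ σ₂ τ₂ q := by
  rw [QTM.reduced, QTM.reduced, map_sum, Finset.sum_mul_sum]
  refine Finset.sum_congr rfl fun d _ => ?_
  symm
  refine Fintype.sum_eq_single d fun d' hd' => ?_
  by_contra h0
  have h1 : M.δ p₁ σ₁ τ₁ q d ≠ 0 := fun h => h0 (by simp [h])
  have h2 : M.δ p₂ σ₂ τ₂ q d' ≠ 0 := fun h => h0 (by simp [h])
  exact hd'.symm (hU _ _ _ _ _ _ _ _ _ h1 h2)

lemma inn_image (M : QTM Γ Q) (hU : M.Unidirectional) (c c' : QCfg Γ Q) :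
    inn (M.image c) (M.image c') =
      if c.head = c'.head ∧ ∀ x, x ≠ c.head → c.tape x = c'.tape x then
        ∑ τ : Γ, ∑ q : Q,
          (starRingEnd ℂ) (M.reduced c.state (c.tape c.head) τ q) *
            M.reduced c'.state (c'.tape c'.head) τ q
      else 0 := by
  obtain ⟨p, h, T⟩ := c
  obtain ⟨p', h', T'⟩ := c'
  simp only at *
  rw [QTM.image, QTM.image]
  simp only [inn_sum_left, inn_sum_right, inn_single_left, Finsupp.single_apply, mul_ite, mul_zero]
  split_ifs with hc
  · obtain ⟨hh, ht⟩ := hc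
    subst hh
    refine Finset.sum_congr rfl fun τ' _ => Finset.sum_congr rfl fun q' _ => ?_
    rw [← uni_sum_dir M hU]
    refine Finset.sum_congr rfl fun d' _ => ?_
    have hcond : ∀ (τ : Γ) (q : Q) (d : Dir3),
        (QCfg.mk q' (h + Dir3.move d') (Function.update T' h τ') =
          QCfg.mk q (h + Dir3.move d) (Function.update T h τ)) ↔
          (τ = τ' ∧ q = q' ∧ d = d') := by
      intro τ q d
      constructor
      · intro e
        rw [QCfg.mk.injEq] at e
        obtain ⟨e1, e2, e3⟩ := e
        have hd : d = d' := Dir3.move_inj (by omega)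
        refine ⟨?_, e1.symm, hd⟩
        have := congrFun e3 h
        simpa [Function.update] using this.symm
      · rintro ⟨rfl, rfl, rfl⟩
        rw [QCfg.mk.injEq]
        refine ⟨rfl, rfl, funext fun x => ?_⟩
        by_cases hx : x = h
        · subst hx; simp [Function.update]
        · simp [Function.update, hx, (ht x hx).symm]
    calc (∑ τ : Γ, ∑ q : Q, ∑ d : Dir3,
        if QCfg.mk q' (h + Dir3.move d') (Function.update T' h τ') =
            QCfg.mk q (h + Dir3.move d) (Function.update T h τ) then
          (starRingEnd ℂ) (M.δ p (T h) τ q d) * M.δ p' (T' h) τ' q' d'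
        else 0)
        = ∑ τ : Γ, ∑ q : Q, ∑ d : Dir3,
          if τ = τ' ∧ q = q' ∧ d = d' then
            (starRingEnd ℂ) (M.δ p (T h) τ q d) * M.δ p' (T' h) τ' q' d'
          else 0 := by
          refine Finset.sum_congr rfl fun τ _ => Finset.sum_congr rfl fun q _ =>
            Finset.sum_congr rfl fun d _ => ?_
          rw [if_congr (hcond τ q d) rfl rfl]
      _ = (starRingEnd ℂ) (M.δ p (T h) τ' q' d') * M.δ p' (T' h) τ' q' d' := by
          rw [Fintype.sum_eq_single τ' (fun τ hτ => by
            refine Finset.sum_eq_zero fun q _ => Finset.sum_eq_zero fun d _ => ?_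
            simp [hτ])]
          rw [Fintype.sum_eq_single q' (fun q hq => by
            refine Finset.sum_eq_zero fun d _ => ?_
            simp [hq])]
          rw [Fintype.sum_eq_single d' (fun d hd => by simp [hd])]
          simp
  · refine Finset.sum_eq_zero fun τ' _ => Finset.sum_eq_zero fun q' _ =>
      Finset.sum_eq_zero fun d' _ => Finset.sum_eq_zero fun τ _ =>
      Finset.sum_eq_zero fun q _ => Finset.sum_eq_zero fun d _ => ?_
    split_ifs with e
    · rw [QCfg.mk.injEq] at e
      obtain ⟨e1, e2, e3⟩ := e
      by_contra h0
      have h1 : M.δ p (T h) τ q d ≠ 0 := fun hz => h0 (by simp [hz])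
      have h2 : M.δ p' (T' h') τ' q' d' ≠ 0 := fun hz => h0 (by simp [hz])
      rw [e1] at h2
      have hd : d' = d := hU _ _ _ _ _ _ _ _ _ h2 h1
      subst hd
      have hh : h = h' := by omega
      refine hc ⟨hh, fun x hx => ?_⟩
      have := congrFun e3 x
      rw [← hh] at this
      simpa [Function.update, hx] using this.symm
    · rfl

lemma inn_image_self (M : QTM Γ Q) (hU : M.Unidirectional) (c : QCfg Γ Q) :
    inn (M.image c) (M.image c) =
      ((∑ τ : Γ, ∑ q : Q, ∑ d : Dir3,
        Complex.normSq (M.δ c.state (c.tape c.head) τ q d) : ℝ) : ℂ) := by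
  rw [inn_image M hU c c, if_pos ⟨rfl, fun x _ => rfl⟩]
  push_cast
  refine Finset.sum_congr rfl fun τ _ => Finset.sum_congr rfl fun q _ => ?_
  rw [← uni_sum_dir M hU]
  exact Finset.sum_congr rfl fun d _ => (Complex.normSq_eq_conj_mul_self).symm

lemma key_eq (M : QTM Γ Q) (hW : M.WellFormed) (v : QCfg Γ Q →₀ ℂ) :
    inn (M.evolve v) (M.evolve v) = inn v v := by
  rw [inn_self, inn_self, hW]

lemma inn_image_diag_one (M : QTM Γ Q) (hW : M.WellFormed) (c : QCfg Γ Q) :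
    inn (M.image c) (M.image c) = 1 := by
  have := key_eq M hW (Finsupp.single c 1)
  rw [evolve_single, one_smul] at this
  simpa [inn_single_left, Finsupp.single_apply] using this

lemma inn_image_off_diag (M : QTM Γ Q) (hW : M.WellFormed) {c c' : QCfg Γ Q}
    (hcc : c ≠ c') : inn (M.image c) (M.image c') = 0 := by
  set A := inn (M.image c) (M.image c') with hA
  have diag := inn_image_diag_one M hW
  have expand : ∀ y : ℂ, inn (M.evolve (Finsupp.single c 1 + Finsupp.single c' y))
      (M.evolve (Finsupp.single c 1 + Finsupp.single c' y)) =
      1 + y * A + (starRingEnd ℂ) y * (starRingEnd ℂ) A +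
        (starRingEnd ℂ) y * y := by
    intro y
    rw [map_add, evolve_single, evolve_single, one_smul]
    rw [inn_add_left, inn_add_right, inn_add_right, inn_smul_left, inn_smul_right,
      inn_smul_right, inn_smul_left, diag, diag, ← hA, ← inn_conj_symm, ← hA]
    ring
  have base : ∀ y : ℂ, inn ((Finsupp.single c 1 + Finsupp.single c' y))
      ((Finsupp.single c 1 + Finsupp.single c' y)) = 1 + (starRingEnd ℂ) y * y := by
    intro y
    rw [inn_add_left, inn_add_right, inn_add_right, inn_single_left, inn_single_left,
      inn_single_left, inn_single_left]
    simp [Finsupp.single_apply, hcc, Ne.symm hcc, Finsupp.single_eq_same]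
  have e1 := (expand 1).symm.trans ((key_eq M hW _).trans (base 1))
  have e2 := (expand Complex.I).symm.trans ((key_eq M hW _).trans (base Complex.I))
  simp only [map_one, one_mul, mul_one, Complex.conj_I] at e1 e2
  have hI' : Complex.I * A = Complex.I * (starRingEnd ℂ) A := by linear_combination e2
  have h2 : A = (starRingEnd ℂ) A := mul_left_cancel₀ Complex.I_ne_zero hI'
  have h1 : A + (starRingEnd ℂ) A = 0 := by linear_combination e1
  linear_combination h1 / 2 + h2 / 2

lemma wf_iff (M : QTM Γ Q) (hU : M.Unidirectional) :
    M.WellFormed ↔ (M.Normalised ∧ M.Orthogonal) := by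
  constructor
  · intro hW
    constructor
    · intro p σ
      have h1 := inn_image_diag_one M hW ⟨p, 0, fun _ => σ⟩
      rw [inn_image_self M hU] at h1
      exact_mod_cast h1
    · intro p₁ σ₁ p₂ σ₂ hne
      set c : QCfg Γ Q := ⟨p₁, 0, fun _ => σ₁⟩ with hc
      set c' : QCfg Γ Q := ⟨p₂, 0, Function.update (fun _ => σ₁) 0 σ₂⟩ with hc'
      have hcc : c ≠ c' := by
        intro e
        rw [hc, hc', QCfg.mk.injEq] at e
        apply hne
        have h2 := congrFun e.2.2 0
        simp [Function.update] at h2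
        exact Prod.ext e.1 h2
      have h0 := inn_image_off_diag M hW hcc
      rw [inn_image M hU] at h0
      rw [if_pos ⟨rfl, fun x hx => by simp [hc, hc', Function.update, show x ≠ 0 from hx]⟩] at h0
      simpa [hc, hc', Function.update] using h0
  · rintro ⟨hN, hO⟩ v
    have key : ∀ c c' : QCfg Γ Q, inn (M.image c) (M.image c') =
        if c = c' then 1 else 0 := by
      intro c c'
      by_cases hcc : c = c'
      · subst hcc
        rw [if_pos rfl, inn_image_self M hU]
        exact_mod_cast congrArg (Complex.ofReal) (hN c.state (c.tape c.head))
      · rw [if_neg hcc, inn_image M hU]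
        split_ifs with hcond
        · obtain ⟨hh, ht⟩ := hcond
          apply hO
          intro he
          apply hcc
          obtain ⟨c1, c2, c3⟩ := c
          obtain ⟨c1', c2', c3'⟩ := c'
          simp only at hh ht he ⊢
          rw [Prod.mk.injEq] at he
          subst hh
          refine QCfg.mk.injEq .. ▸ ⟨he.1, rfl, funext fun x => ?_⟩
          by_cases hx : x = c2
          · subst hx; exact he.2
          · exact ht x hx
        · rfl
    have lhs : (normSqF (M.evolve v) : ℂ) = (normSqF v : ℂ) := by
      rw [← inn_self, ← inn_self, evolve_apply]
      rw [inn_sum_left]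
      calc (∑ c ∈ v.support, inn (v c • M.image c) (∑ c' ∈ v.support, v c' • M.image c'))
          = ∑ c ∈ v.support, ∑ c' ∈ v.support,
            (starRingEnd ℂ) (v c) * (v c') * inn (M.image c) (M.image c') := by
            refine Finset.sum_congr rfl fun c _ => ?_
            rw [inn_sum_right]
            refine Finset.sum_congr rfl fun c' _ => ?_
            rw [inn_smul_left, inn_smul_right]; ring
        _ = ∑ c ∈ v.support, (starRingEnd ℂ) (v c) * (v c) := by
            refine Finset.sum_congr rfl fun c hc => ?_
            simp only [key, mul_ite, mul_one, mul_zero]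
            rw [Finset.sum_ite_eq v.support c (fun c' => (starRingEnd ℂ) (v c) * v c'),
              if_pos hc]
        _ = inn v v := by
            rw [inn, Finsupp.sum]
    exact_mod_cast lhs

open scoped InnerProductSpace in
lemma completion {Γ Q : Type} [Fintype Γ] [Fintype Q]
    [DecidableEq Γ] [DecidableEq Q]
    (P : Set (Q × Γ)) (δ₀ : Q → Γ → Γ → Q → Dir3 → ℂ)
    (hU₀ : ∀ p₁ σ₁ τ₁ p₂ σ₂ τ₂ (q : Q) (d₁ d₂ : Dir3),
        (p₁, σ₁) ∈ P → (p₂, σ₂) ∈ P →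
        δ₀ p₁ σ₁ τ₁ q d₁ ≠ 0 → δ₀ p₂ σ₂ τ₂ q d₂ ≠ 0 → d₁ = d₂)
    (hN₀ : ∀ p σ, (p, σ) ∈ P →
        ∑ τ : Γ, ∑ q : Q, ∑ d : Dir3, Complex.normSq (δ₀ p σ τ q d) = 1)
    (hO₀ : ∀ p₁ σ₁ p₂ σ₂, (p₁, σ₁) ∈ P → (p₂, σ₂) ∈ P → (p₁, σ₁) ≠ (p₂, σ₂) →
        ∑ τ : Γ, ∑ q : Q,
          (starRingEnd ℂ) (∑ d : Dir3, δ₀ p₁ σ₁ τ q d)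
            * (∑ d : Dir3, δ₀ p₂ σ₂ τ q d) = 0) :
    ∃ δ : Q → Γ → Γ → Q → Dir3 → ℂ,
      (∀ p σ, (p, σ) ∈ P → ∀ τ q d, δ p σ τ q d = δ₀ p σ τ q d) ∧
      ∀ (b : Γ) (x y : Q),
        (QTM.mk b x y δ).Unidirectional ∧ (QTM.mk b x y δ).WellFormed := by
  classical
  -- the canonical direction of each state
  set D : Q → Dir3 := fun q =>
    if h : ∃ x : Q × Γ × Γ × Dir3, (x.1, x.2.1) ∈ P ∧
        δ₀ x.1 x.2.1 x.2.2.1 q x.2.2.2 ≠ 0 then h.choose.2.2.2 else Dir3.N with hDdef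
  have hD : ∀ p σ τ q d, (p, σ) ∈ P → δ₀ p σ τ q d ≠ 0 → d = D q := by
    intro p σ τ q d hP hne
    have hex : ∃ x : Q × Γ × Γ × Dir3, (x.1, x.2.1) ∈ P ∧
        δ₀ x.1 x.2.1 x.2.2.1 q x.2.2.2 ≠ 0 := ⟨⟨p, σ, τ, d⟩, hP, hne⟩
    have hspec := hex.choose_spec
    have : D q = hex.choose.2.2.2 := by rw [hDdef]; exact dif_pos hex
    rw [this]
    exact hU₀ _ _ _ _ _ _ _ _ _ hP hspec.1 hne hspec.2
  -- the reduced vectors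
  set vι : Q × Γ → EuclideanSpace ℂ (Γ × Q) := fun pc =>
    WithLp.toLp 2 fun τq : Γ × Q => ∑ d : Dir3, δ₀ pc.1 pc.2 τq.1 τq.2 d with hvι
  have sum_dir : ∀ p₁ σ₁ τ₁ p₂ σ₂ τ₂ (q : Q), (p₁, σ₁) ∈ P → (p₂, σ₂) ∈ P →
      (starRingEnd ℂ) (∑ d : Dir3, δ₀ p₁ σ₁ τ₁ q d) * (∑ d : Dir3, δ₀ p₂ σ₂ τ₂ q d)
        = ∑ d : Dir3, (starRingEnd ℂ) (δ₀ p₁ σ₁ τ₁ q d) * δ₀ p₂ σ₂ τ₂ q d := by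
    intro p₁ σ₁ τ₁ p₂ σ₂ τ₂ q h1 h2
    rw [map_sum, Finset.sum_mul_sum]
    refine Finset.sum_congr rfl fun d _ => ?_
    refine (Fintype.sum_eq_single
      (f := fun d' => (starRingEnd ℂ) (δ₀ p₁ σ₁ τ₁ q d) * δ₀ p₂ σ₂ τ₂ q d')
      d fun d' hd' => ?_)
    by_contra h0
    have g1 : δ₀ p₁ σ₁ τ₁ q d ≠ 0 := fun h => h0 (by simp [h])
    have g2 : δ₀ p₂ σ₂ τ₂ q d' ≠ 0 := fun h => h0 (by simp [h])
    exact hd'.symm (hU₀ _ _ _ _ _ _ _ _ _ h1 h2 g1 g2)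
  -- orthonormality of the restricted family
  have horth : Orthonormal ℂ (P.restrict vι) := by
    rw [orthonormal_iff_ite]
    intro i j
    rw [PiLp.inner_apply]
    by_cases hij : i = j
    · subst hij
      rw [if_pos rfl]
      have hiP : ((i : Q × Γ).1, (i : Q × Γ).2) ∈ P := by simpa using i.2
      have := hN₀ (i : Q × Γ).1 (i : Q × Γ).2 hiP
      calc (∑ τq : Γ × Q, inner ℂ (P.restrict vι i τq) (P.restrict vι i τq))
          = ∑ τ : Γ, ∑ q : Q, (starRingEnd ℂ) (vι i (τ, q)) * (vι i (τ, q)) := by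
            rw [Fintype.sum_prod_type]; exact Finset.sum_congr rfl fun _ _ => Finset.sum_congr rfl fun _ _ => RCLike.inner_apply' _ _
        _ = ∑ τ : Γ, ∑ q : Q, ∑ d : Dir3,
              ((Complex.normSq (δ₀ (i : Q × Γ).1 (i : Q × Γ).2 τ q d) : ℝ) : ℂ) := by
            refine Finset.sum_congr rfl fun τ _ => Finset.sum_congr rfl fun q _ => ?_
            rw [hvι]
            rw [sum_dir _ _ _ _ _ _ _ hiP hiP]
            exact Finset.sum_congr rfl fun d _ =>
              (Complex.normSq_eq_conj_mul_self).symm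
        _ = 1 := by
            exact_mod_cast this
    · rw [if_neg hij]
      have hiP : ((i : Q × Γ).1, (i : Q × Γ).2) ∈ P := by simpa using i.2
      have hjP : ((j : Q × Γ).1, (j : Q × Γ).2) ∈ P := by simpa using j.2
      have hne : ((i : Q × Γ).1, (i : Q × Γ).2) ≠ ((j : Q × Γ).1, (j : Q × Γ).2) := by
        intro e
        exact hij (Subtype.ext (by simpa using e))
      have := hO₀ _ _ _ _ hiP hjP hne
      calc (∑ τq : Γ × Q, inner ℂ (P.restrict vι i τq) (P.restrict vι j τq))
          = ∑ τ : Γ, ∑ q : Q, (starRingEnd ℂ) (vι i (τ, q)) * (vι j (τ, q)) := by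
            rw [Fintype.sum_prod_type]; exact Finset.sum_congr rfl fun _ _ => Finset.sum_congr rfl fun _ _ => RCLike.inner_apply' _ _
        _ = 0 := this
  have hcard : Module.finrank ℂ (EuclideanSpace ℂ (Γ × Q)) = Fintype.card (Q × Γ) := by
    rw [finrank_euclideanSpace, Fintype.card_prod, Fintype.card_prod, mul_comm]
  obtain ⟨b, hb⟩ := horth.exists_orthonormalBasis_extension_of_card_eq hcard
  have hbinner : ∀ i j : Q × Γ, (inner ℂ (b i) (b j) : ℂ) = if i = j then 1 else 0 :=
    orthonormal_iff_ite.mp b.orthonormal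
  refine ⟨fun p σ τ q d => if d = D q then b (p, σ) (τ, q) else 0, ?_, ?_⟩
  · intro p σ hP τ q d
    have hbv : b (p, σ) (τ, q) = ∑ d' : Dir3, δ₀ p σ τ q d' :=
      congrArg (fun v => v (τ, q)) (hb (p, σ) hP)
    by_cases hd : d = D q
    · subst hd
      show (if D q = D q then b (p, σ) (τ, q) else 0) = δ₀ p σ τ q (D q)
      rw [if_pos rfl, hbv]
      refine Fintype.sum_eq_single (D q) fun d' hd' => ?_
      by_contra h0
      exact hd' (hD _ _ _ _ _ hP h0)
    · show (if d = D q then b (p, σ) (τ, q) else 0) = δ₀ p σ τ q d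
      rw [if_neg hd]
      by_contra h0
      exact hd (hD _ _ _ _ _ hP fun h => h0 h.symm)
  · intro bl x y
    have hUM : (QTM.mk bl x y
        (fun p σ τ q d => if d = D q then b (p, σ) (τ, q) else 0)).Unidirectional := by
      intro p₁ σ₁ τ₁ p₂ σ₂ τ₂ q d₁ d₂ h1 h2
      have e1 : d₁ = D q := by
        by_contra e; exact h1 (if_neg e)
      have e2 : d₂ = D q := by
        by_contra e; exact h2 (if_neg e)
      rw [e1, e2]
    refine ⟨hUM, ?_⟩
    rw [wf_iff _ hUM]
    have hred : ∀ p σ τ q, (QTM.mk bl x y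
        (fun p σ τ q d => if d = D q then b (p, σ) (τ, q) else 0)).reduced p σ τ q
          = b (p, σ) (τ, q) := by
      intro p σ τ q
      rw [QTM.reduced]
      simp
    constructor
    · intro p σ
      have h1 := hbinner (p, σ) (p, σ)
      rw [if_pos rfl, PiLp.inner_apply] at h1
      have h2 : (∑ τq : Γ × Q, inner ℂ (b (p, σ) τq) (b (p, σ) τq) : ℂ)
          = ∑ τ : Γ, ∑ q : Q, ∑ d : Dir3, ((Complex.normSq
              (if d = D q then b (p, σ) (τ, q) else 0) : ℝ) : ℂ) := by
        rw [Fintype.sum_prod_type]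
        refine Finset.sum_congr rfl fun τ _ => Finset.sum_congr rfl fun q _ => ?_
        have hcol := Fintype.sum_eq_single
          (f := fun d : Dir3 => ((Complex.normSq
            (if d = D q then b (p, σ) (τ, q) else 0) : ℝ) : ℂ))
          (D q) (fun d hd => by simp [hd])
        rw [show (∑ d : Dir3, ((Complex.normSq
            (if d = D q then b (p, σ) (τ, q) else 0) : ℝ) : ℂ))
            = ((Complex.normSq (b (p, σ) (τ, q)) : ℝ) : ℂ) from hcol.trans (by simp)]
        rw [Complex.normSq_eq_conj_mul_self]
        exact RCLike.inner_apply' _ _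
      rw [h2] at h1
      exact_mod_cast h1
    · intro p₁ σ₁ p₂ σ₂ hne
      have h1 := hbinner (p₁, σ₁) (p₂, σ₂)
      rw [if_neg hne, PiLp.inner_apply, Fintype.sum_prod_type] at h1
      calc (∑ τ : Γ, ∑ q : Q, (starRingEnd ℂ)
            ((QTM.mk bl x y (fun p σ τ q d => if d = D q then b (p, σ) (τ, q) else 0)).reduced p₁ σ₁ τ q)
            * (QTM.mk bl x y (fun p σ τ q d => if d = D q then b (p, σ) (τ, q) else 0)).reduced p₂ σ₂ τ q)
          = ∑ τ : Γ, ∑ q : Q, (starRingEnd ℂ) (b (p₁, σ₁) (τ, q)) * b (p₂, σ₂) (τ, q) := by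
            refine Finset.sum_congr rfl fun τ _ => Finset.sum_congr rfl fun q _ => ?_
            rw [hred, hred]
        _ = 0 := (Finset.sum_congr rfl fun _ _ => Finset.sum_congr rfl fun _ _ => (RCLike.inner_apply' _ _).symm).trans h1

/-- **Quantum local well-formedness** (Theorem `QTM_transitions`).  A unidirectional
QTM is well-formed iff its transition function satisfies the normalisation and
orthogonality conditions; and any partial unidirectional quantum transition function
satisfying these conditions (on its domain of definition `P`) can be completed to the
transition function of a well-formed unidirectional QTM. -/
theorem quantum_local_wellformedness {Γ Q : Type} [Fintype Γ] [Fintype Q]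
    [DecidableEq Γ] [DecidableEq Q] :
    (∀ M : QTM Γ Q, M.Unidirectional →
      (M.WellFormed ↔ (M.Normalised ∧ M.Orthogonal))) ∧
    (∀ (P : Set (Q × Γ)) (δ₀ : Q → Γ → Γ → Q → Dir3 → ℂ),
      -- partial unidirectionality
      (∀ p₁ σ₁ τ₁ p₂ σ₂ τ₂ (q : Q) (d₁ d₂ : Dir3),
        (p₁, σ₁) ∈ P → (p₂, σ₂) ∈ P →
        δ₀ p₁ σ₁ τ₁ q d₁ ≠ 0 → δ₀ p₂ σ₂ τ₂ q d₂ ≠ 0 → d₁ = d₂) →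
      -- normalisation on the defined part
      (∀ p σ, (p, σ) ∈ P →
        ∑ τ : Γ, ∑ q : Q, ∑ d : Dir3, Complex.normSq (δ₀ p σ τ q d) = 1) →
      -- orthogonality on the defined part
      (∀ p₁ σ₁ p₂ σ₂, (p₁, σ₁) ∈ P → (p₂, σ₂) ∈ P → (p₁, σ₁) ≠ (p₂, σ₂) →
        ∑ τ : Γ, ∑ q : Q,
          (starRingEnd ℂ) (∑ d : Dir3, δ₀ p₁ σ₁ τ q d)
            * (∑ d : Dir3, δ₀ p₂ σ₂ τ q d) = 0) →
      -- completion to a total well-formed unidirectional transition function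
      ∃ δ : Q → Γ → Γ → Q → Dir3 → ℂ,
        (∀ p σ, (p, σ) ∈ P → ∀ τ q d, δ p σ τ q d = δ₀ p σ τ q d) ∧
        ∀ (b : Γ) (x y : Q),
          (QTM.mk b x y δ).Unidirectional ∧ (QTM.mk b x y δ).WellFormed) :=
  ⟨fun M hU => wf_iff M hU, fun P δ₀ hU₀ hN₀ hO₀ => completion P δ₀ hU₀ hN₀ hO₀⟩

end
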